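/- Let f : ℝ≥0 → ℝ≥0 be non-increasing with non-decreasing work and let C > 0, γ := critical speed with f(γ) ≤ C. For any finite set S of machines with speeds s_i > 0 and σ(S) := Σ_{i∈S} s_i ≥ γ, setting x_i := s_i / σ(S), the following hold for each i ∈ S: (1) if f(s_i) ≤ C then f(s_i) * x_i ≤ f(σ(S)); (2) if f(s_i) > C then f(γ) * (γ / s_i) * x_i ≤ f(σ(S)). -/

import Mathlib

open scoped NNReal

theorem stmt_12 {ι : Type*} (f : ℝ≥0 → ℝ≥0) (hf : Antitone f)
    (hwork : Monotone fun s => s * f s)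
    (C : ℝ≥0) (hC : 0 < C)
    (γ : ℕ) (hγ : f γ ≤ C) (hγmin : ∀ q : ℕ, f q ≤ C → γ ≤ q)
    (S : Finset ι) (s : ι → ℝ≥0) (hs : ∀ i ∈ S, 0 < s i)
    (hσ : (γ : ℝ≥0) ≤ ∑ i ∈ S, s i)
    (i : ι) (hi : i ∈ S) :
    (f (s i) ≤ C → f (s i) * (s i / ∑ i ∈ S, s i) ≤ f (∑ i ∈ S, s i)) ∧
    (C < f (s i) →
      f γ * ((γ : ℝ≥0) / s i) * (s i / ∑ i ∈ S, s i) ≤ f (∑ i ∈ S, s i)) := by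
  set σ := ∑ i ∈ S, s i with hσdef
  have hsi : 0 < s i := hs i hi
  have hle : s i ≤ σ := Finset.single_le_sum (f := s) (fun j _ => zero_le) hi
  have hσpos : 0 < σ := lt_of_lt_of_le hsi hle
  have hσne : σ ≠ 0 := hσpos.ne'
  constructor
  · intro _
    have h : s i * f (s i) ≤ σ * f σ := by simpa using hwork hle
    rw [← mul_div_assoc, div_le_iff₀ hσpos, mul_comm, mul_comm (f σ)]
    exact h
  · intro _
    have h : (γ : ℝ≥0) * f γ ≤ σ * f σ := by simpa using hwork hσ
    have hcancel : (γ : ℝ≥0) / s i * (s i / σ) = (γ : ℝ≥0) / σ := by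
      rw [div_mul_div_comm, mul_comm (γ : ℝ≥0), mul_div_mul_left _ _ hsi.ne']
    rw [mul_assoc, hcancel, ← mul_div_assoc, div_le_iff₀ hσpos, mul_comm,
      mul_comm (f σ)]
    exact h
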